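/- Let p ≥ 2, λ > 0, C > 0, let P(t,s,x,·) be a two-parameter family of Markov transition kernels on ℝ^d, let (Ω,F,P) be a probability space, and let φ(t) ∈ L^p(Ω;ℝ^d) for each t ∈ ℝ with laws ρ_t := law(φ(t)). Assume that for every t ≥ s and every x ∈ ℝ^d there exists a random variable X_t^{s,x} on Ω with law P(t,s,x,·) such that E|X_t^{s,x} − φ(t)|^p ≤ C(1+|x|^p) e^{−pλ(t−s)}. Then every entrance measure μ of P with sup_{t∈ℝ} ∫_{ℝ^d} |x|^p μ_t(dx) < ∞ satisfies μ_t = ρ_t for every t ∈ ℝ. -/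

import Mathlib

open MeasureTheory Metric Filter Topology
open scoped ENNReal NNReal

/-- **Uniqueness half of Theorem 2.5.**  Given transition kernels `K(t,s,x,·)` which can be
realised by random variables `X_t^{s,x}` converging to `φ(t)` in `L^p` at exponential rate,
every entrance measure of `K` with uniformly bounded `p`-th moments coincides with the laws
`ρ_t = law(φ(t))`. -/
theorem entrance_measure_unique {d : ℕ}
    {Ω : Type*} [MeasurableSpace Ω] (P : Measure Ω) [IsProbabilityMeasure P]
    (p : ℝ) (hp : 2 ≤ p) (lam : ℝ) (hlam : 0 < lam) (C : ℝ) (hC : 0 < C)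
    -- the two-parameter family of Markov transition kernels
    (K : ℝ → ℝ → EuclideanSpace ℝ (Fin d) → Measure (EuclideanSpace ℝ (Fin d)))
    (hK_prob : ∀ t s : ℝ, s ≤ t → ∀ x, IsProbabilityMeasure (K t s x))
    (hK_meas : ∀ t s : ℝ, s ≤ t → ∀ Γ : Set (EuclideanSpace ℝ (Fin d)),
      MeasurableSet Γ → Measurable fun x => K t s x Γ)
    -- the random path φ with laws ρ_t = law(φ(t))
    (φ : ℝ → Ω → EuclideanSpace ℝ (Fin d))
    (hφ_meas : ∀ t, Measurable (φ t))
    (hφ_Lp : ∀ t, MemLp (φ t) (ENNReal.ofReal p) P)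
    -- realisation of the kernels, exponentially close to φ in L^p
    (happrox : ∀ t s : ℝ, s ≤ t → ∀ x : EuclideanSpace ℝ (Fin d),
      ∃ X : Ω → EuclideanSpace ℝ (Fin d), Measurable X ∧ P.map X = K t s x ∧
        ∫ ω, ‖X ω - φ t ω‖ ^ p ∂P ≤ C * (1 + ‖x‖ ^ p) * Real.exp (-(p * lam) * (t - s))) :
    -- every entrance measure with uniformly bounded p-th moments equals ρ
    ∀ μ : ℝ → Measure (EuclideanSpace ℝ (Fin d)),
      (∀ t, IsProbabilityMeasure (μ t)) →
      (∀ t s : ℝ, s ≤ t → ∀ Γ : Set (EuclideanSpace ℝ (Fin d)), MeasurableSet Γ →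
        ∫⁻ x, K t s x Γ ∂(μ s) = μ t Γ) →
      (⨆ t : ℝ, ∫⁻ x, ENNReal.ofReal (‖x‖ ^ p) ∂(μ t)) < ⊤ →
      ∀ t : ℝ, μ t = P.map (φ t) := by
  intro μ hμprob hμent hμmom t
  classical
  have hp0 : (0 : ℝ) < p := by linarith
  set ρ : ℝ → Measure (EuclideanSpace ℝ (Fin d)) := fun u => P.map (φ u) with hρdef
  have hρprob : ∀ u, IsProbabilityMeasure (ρ u) := fun u =>
    Measure.isProbabilityMeasure_map (hφ_meas u).aemeasurable
  set m : ℝ≥0∞ := ⨆ u : ℝ, ∫⁻ x, ENNReal.ofReal (‖x‖ ^ p) ∂(μ u) with hmdef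
  have hm_top : m ≠ ⊤ := hμmom.ne
  have hnormmeas : Measurable fun y : EuclideanSpace ℝ (Fin d) => ENNReal.ofReal (‖y‖ ^ p) :=
    ENNReal.measurable_ofReal.comp
      ((Real.continuous_rpow_const hp0.le).comp continuous_norm).measurable
  have hKm : ∀ s : ℝ, s ≤ t → Measurable (K t s) := fun s hst =>
    Measure.measurable_of_measurable_coe _ fun Γ hΓ => hK_meas t s hst Γ hΓ
  have hbind : ∀ s : ℝ, s ≤ t → (μ s).bind (K t s) = μ t := fun s hst =>
    Measure.ext fun Γ hΓ => by
      rw [Measure.bind_apply hΓ (hKm s hst).aemeasurable]; exact hμent t s hst Γ hΓ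
  have haefin : ∀ s : ℝ, s ≤ t →
      ∀ᵐ x ∂ μ s, (∫⁻ y, ENNReal.ofReal (‖y‖ ^ p) ∂ K t s x) ≠ ⊤ := by
    intro s hst
    have h1 : ∫⁻ x, (∫⁻ y, ENNReal.ofReal (‖y‖ ^ p) ∂ K t s x) ∂ μ s ≠ ⊤ := by
      rw [← Measure.lintegral_bind (hKm s hst).aemeasurable hnormmeas.aemeasurable, hbind s hst]
      exact (lt_of_le_of_lt
        (le_iSup (fun u => ∫⁻ x, ENNReal.ofReal (‖x‖ ^ p) ∂ μ u) t) hμmom).ne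
    have hmeas : Measurable fun x => ∫⁻ y, ENNReal.ofReal (‖y‖ ^ p) ∂ K t s x :=
      (Measure.measurable_lintegral hnormmeas).comp (hKm s hst)
    filter_upwards [ae_lt_top hmeas h1] with x hx using hx.ne
  -- the main quantitative estimate
  have main : ∀ s : ℝ, s ≤ t → ∀ δ : ℝ, 0 < δ →
      ∀ Γ : Set (EuclideanSpace ℝ (Fin d)), MeasurableSet Γ →
      μ t Γ ≤ ρ t (thickening δ Γ)
        + ENNReal.ofReal (C * Real.exp (-(p * lam) * (t - s)))
          * (ENNReal.ofReal (δ ^ p))⁻¹ * (1 + m) ∧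
      ρ t Γ ≤ μ t (thickening δ Γ)
        + ENNReal.ofReal (C * Real.exp (-(p * lam) * (t - s)))
          * (ENNReal.ofReal (δ ^ p))⁻¹ * (1 + m) := by
    intro s hst δ hδ Γ hΓ
    haveI := hμprob s
    set cE : ℝ≥0∞ := ENNReal.ofReal (C * Real.exp (-(p * lam) * (t - s))) with hcE
    set iδ : ℝ≥0∞ := (ENNReal.ofReal (δ ^ p))⁻¹ with hiδ
    have hδp : (0 : ℝ) < δ ^ p := Real.rpow_pos_of_pos hδ p
    have hδ0 : ENNReal.ofReal (δ ^ p) ≠ 0 := by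
      simp only [ne_eq, ENNReal.ofReal_eq_zero, not_le]; exact hδp
    set g : EuclideanSpace ℝ (Fin d) → ℝ≥0∞ :=
      fun x => cE * iδ * (1 + ENNReal.ofReal (‖x‖ ^ p)) with hg
    have hgmeas : Measurable g := (measurable_const.add hnormmeas).const_mul _
    have hthick : MeasurableSet (thickening δ Γ) := isOpen_thickening.measurableSet
    -- a.e. pointwise bound
    have hae : ∀ᵐ x ∂ μ s,
        K t s x Γ ≤ ρ t (thickening δ Γ) + g x ∧
        ρ t Γ ≤ K t s x (thickening δ Γ) + g x := by
      filter_upwards [haefin s hst] with x hx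
      obtain ⟨X, hXm, hXlaw, hXint⟩ := happrox t s hst x
      have hDmeas : Measurable fun ω => ‖X ω - φ t ω‖ := (hXm.sub (hφ_meas t)).norm
      have hofne : ENNReal.ofReal p ≠ 0 := by
        simp only [ne_eq, ENNReal.ofReal_eq_zero, not_le]; exact hp0
      have hXLp : MemLp X (ENNReal.ofReal p) P := by
        refine ⟨hXm.aestronglyMeasurable, ?_⟩
        rw [eLpNorm_eq_lintegral_rpow_enorm_toReal hofne ENNReal.ofReal_ne_top]
        refine ENNReal.rpow_lt_top_of_nonneg (by positivity) ?_
        have hconv : ∀ y : EuclideanSpace ℝ (Fin d),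
            ‖y‖ₑ ^ (ENNReal.ofReal p).toReal = ENNReal.ofReal (‖y‖ ^ p) := by
          intro y
          rw [ENNReal.toReal_ofReal hp0.le, ← ofReal_norm_eq_enorm,
            ← ENNReal.ofReal_rpow_of_nonneg (norm_nonneg _) hp0.le]
        simp only [hconv]
        rw [← lintegral_map hnormmeas hXm, hXlaw]
        exact hx
      have hsub : MemLp (fun ω => X ω - φ t ω) (ENNReal.ofReal p) P := hXLp.sub (hφ_Lp t)
      have hint : Integrable (fun ω => ‖X ω - φ t ω‖ ^ p) P := by
        have := hsub.integrable_norm_rpow hofne ENNReal.ofReal_ne_top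
        simpa [ENNReal.toReal_ofReal hp0.le] using this
      have hlb : ∫⁻ ω, ENNReal.ofReal (‖X ω - φ t ω‖ ^ p) ∂P
          ≤ cE * (1 + ENNReal.ofReal (‖x‖ ^ p)) := by
        rw [← ofReal_integral_eq_lintegral_ofReal hint
          (ae_of_all _ fun ω => by positivity)]
        calc ENNReal.ofReal (∫ ω, ‖X ω - φ t ω‖ ^ p ∂P)
            ≤ ENNReal.ofReal (C * Real.exp (-(p * lam) * (t - s)) * (1 + ‖x‖ ^ p)) := by
              apply ENNReal.ofReal_le_ofReal
              calc ∫ ω, ‖X ω - φ t ω‖ ^ p ∂P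
                  ≤ C * (1 + ‖x‖ ^ p) * Real.exp (-(p * lam) * (t - s)) := hXint
                _ = C * Real.exp (-(p * lam) * (t - s)) * (1 + ‖x‖ ^ p) := by ring
          _ = cE * (1 + ENNReal.ofReal (‖x‖ ^ p)) := by
              rw [ENNReal.ofReal_mul (by positivity),
                ENNReal.ofReal_add zero_le_one (by positivity), ENNReal.ofReal_one]
      have hA : P {ω | δ ≤ ‖X ω - φ t ω‖} ≤ g x := by
        have hfmeas : Measurable fun ω => ENNReal.ofReal (‖X ω - φ t ω‖ ^ p) :=
          hnormmeas.comp (hXm.sub (hφ_meas t))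
        have hsubset : {ω | δ ≤ ‖X ω - φ t ω‖} ⊆
            {ω | ENNReal.ofReal (δ ^ p) ≤ ENNReal.ofReal (‖X ω - φ t ω‖ ^ p)} :=
          fun ω hω => ENNReal.ofReal_le_ofReal (Real.rpow_le_rpow hδ.le hω hp0.le)
        have hmk := mul_meas_ge_le_lintegral₀ (μ := P) hfmeas.aemeasurable (ENNReal.ofReal (δ ^ p))
        have h2 : P {ω | ENNReal.ofReal (δ ^ p) ≤ ENNReal.ofReal (‖X ω - φ t ω‖ ^ p)}
            ≤ (∫⁻ ω, ENNReal.ofReal (‖X ω - φ t ω‖ ^ p) ∂P) / ENNReal.ofReal (δ ^ p) :=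
          (ENNReal.le_div_iff_mul_le (Or.inl hδ0) (Or.inl ENNReal.ofReal_ne_top)).2
            (by rw [mul_comm]; exact hmk)
        rw [div_eq_mul_inv, ← hiδ] at h2
        calc P {ω | δ ≤ ‖X ω - φ t ω‖}
            ≤ P {ω | ENNReal.ofReal (δ ^ p) ≤ ENNReal.ofReal (‖X ω - φ t ω‖ ^ p)} :=
              measure_mono hsubset
          _ ≤ (∫⁻ ω, ENNReal.ofReal (‖X ω - φ t ω‖ ^ p) ∂P) * iδ := h2
          _ ≤ cE * (1 + ENNReal.ofReal (‖x‖ ^ p)) * iδ := mul_le_mul_left hlb _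
          _ = g x := by rw [hg]; ring
      have hρapp : ρ t (thickening δ Γ) = P (φ t ⁻¹' thickening δ Γ) :=
        Measure.map_apply (hφ_meas t) hthick
      have hρΓ : ρ t Γ = P (φ t ⁻¹' Γ) := Measure.map_apply (hφ_meas t) hΓ
      have hKΓ : K t s x Γ = P (X ⁻¹' Γ) := by
        rw [← hXlaw, Measure.map_apply hXm hΓ]
      have hKΔ : K t s x (thickening δ Γ) = P (X ⁻¹' thickening δ Γ) := by
        rw [← hXlaw, Measure.map_apply hXm hthick]
      constructor
      · rw [hKΓ, hρapp]
        calc P (X ⁻¹' Γ)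
            ≤ P (φ t ⁻¹' thickening δ Γ ∪ {ω | δ ≤ ‖X ω - φ t ω‖}) := by
              apply measure_mono
              intro ω hω
              by_cases hcase : δ ≤ ‖X ω - φ t ω‖
              · exact Or.inr hcase
              · refine Or.inl (mem_thickening_iff.2 ⟨X ω, hω, ?_⟩)
                rw [dist_eq_norm, norm_sub_rev]
                exact lt_of_not_ge hcase
          _ ≤ P (φ t ⁻¹' thickening δ Γ) + P {ω | δ ≤ ‖X ω - φ t ω‖} := measure_union_le _ _
          _ ≤ P (φ t ⁻¹' thickening δ Γ) + g x := add_le_add_right hA _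
      · rw [hρΓ, hKΔ]
        calc P (φ t ⁻¹' Γ)
            ≤ P (X ⁻¹' thickening δ Γ ∪ {ω | δ ≤ ‖X ω - φ t ω‖}) := by
              apply measure_mono
              intro ω hω
              by_cases hcase : δ ≤ ‖X ω - φ t ω‖
              · exact Or.inr hcase
              · refine Or.inl (mem_thickening_iff.2 ⟨φ t ω, hω, ?_⟩)
                rw [dist_eq_norm]
                exact lt_of_not_ge hcase
          _ ≤ P (X ⁻¹' thickening δ Γ) + P {ω | δ ≤ ‖X ω - φ t ω‖} := measure_union_le _ _
          _ ≤ P (X ⁻¹' thickening δ Γ) + g x := add_le_add_right hA _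
    -- integrate the pointwise bound
    have hgint : ∫⁻ x, g x ∂ μ s ≤ cE * iδ * (1 + m) := by
      rw [hg]
      rw [lintegral_const_mul _ (f := fun y => 1 + ENNReal.ofReal (‖y‖ ^ p)) (measurable_const.add hnormmeas)]
      refine mul_le_mul_right ?_ _
      rw [lintegral_add_left measurable_const, lintegral_const, measure_univ, mul_one]
      exact add_le_add_right (le_iSup (fun u => ∫⁻ x, ENNReal.ofReal (‖x‖ ^ p) ∂ μ u) s) 1
    constructor
    · calc μ t Γ = ∫⁻ x, K t s x Γ ∂ μ s := (hμent t s hst Γ hΓ).symm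
        _ ≤ ∫⁻ x, (ρ t (thickening δ Γ) + g x) ∂ μ s :=
            lintegral_mono_ae (hae.mono fun x hx => hx.1)
        _ = ρ t (thickening δ Γ) * μ s Set.univ + ∫⁻ x, g x ∂ μ s := by
            rw [lintegral_add_right _ hgmeas, lintegral_const]
        _ ≤ ρ t (thickening δ Γ) + cE * iδ * (1 + m) := by
            rw [measure_univ, mul_one]; exact add_le_add_right hgint _
    · calc ρ t Γ = ρ t Γ * μ s Set.univ := by rw [measure_univ, mul_one]
        _ = ∫⁻ _, ρ t Γ ∂ μ s := (lintegral_const _).symm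
        _ ≤ ∫⁻ x, (K t s x (thickening δ Γ) + g x) ∂ μ s :=
            lintegral_mono_ae (hae.mono fun x hx => hx.2)
        _ = ∫⁻ x, K t s x (thickening δ Γ) ∂ μ s + ∫⁻ x, g x ∂ μ s :=
            lintegral_add_right _ hgmeas
        _ ≤ μ t (thickening δ Γ) + cE * iδ * (1 + m) := by
            rw [hμent t s hst _ hthick]; exact add_le_add_right hgint _
  -- the error term tends to zero as s → -∞
  have herr : ∀ δ : ℝ, 0 < δ → Tendsto (fun s : ℝ =>
      ENNReal.ofReal (C * Real.exp (-(p * lam) * (t - s)))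
        * (ENNReal.ofReal (δ ^ p))⁻¹ * (1 + m)) atBot (𝓝 0) := by
    intro δ hδ
    have hδp : (0 : ℝ) < δ ^ p := Real.rpow_pos_of_pos hδ p
    have hδ0 : ENNReal.ofReal (δ ^ p) ≠ 0 := by
      simp only [ne_eq, ENNReal.ofReal_eq_zero, not_le]; exact hδp
    have hconst : (ENNReal.ofReal (δ ^ p))⁻¹ * (1 + m) ≠ ⊤ :=
      ENNReal.mul_ne_top (ENNReal.inv_ne_top.2 hδ0)
        (ENNReal.add_ne_top.2 ⟨ENNReal.one_ne_top, hm_top⟩)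
    have h1 : Tendsto (fun s : ℝ => C * Real.exp (-(p * lam) * (t - s))) atBot (𝓝 0) := by
      rw [show (0 : ℝ) = C * 0 by ring]
      apply Tendsto.const_mul
      apply Real.tendsto_exp_atBot.comp
      have hlin : Tendsto (fun s : ℝ => p * lam * s + -(p * lam * t)) atBot atBot :=
        tendsto_atBot_add_const_right _ _
          (Tendsto.const_mul_atBot (by positivity) tendsto_id)
      refine hlin.congr fun s => by ring
    have h2 := ENNReal.tendsto_ofReal h1
    rw [ENNReal.ofReal_zero] at h2
    have h3 := ENNReal.Tendsto.mul_const h2 (Or.inr hconst)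
    rw [zero_mul] at h3
    simpa [mul_assoc] using h3
  -- equality on closed sets
  have hclosed : ∀ Γ : Set (EuclideanSpace ℝ (Fin d)), IsClosed Γ → μ t Γ = ρ t Γ := by
    intro Γ hΓc
    have hΓ := hΓc.measurableSet
    haveI := hμprob t
    haveI := hρprob t
    have step1 : ∀ δ : ℝ, 0 < δ → μ t Γ ≤ ρ t (thickening δ Γ) := by
      intro δ hδ
      have hlim : Tendsto (fun s : ℝ => ρ t (thickening δ Γ)
          + ENNReal.ofReal (C * Real.exp (-(p * lam) * (t - s)))
            * (ENNReal.ofReal (δ ^ p))⁻¹ * (1 + m)) atBot (𝓝 (ρ t (thickening δ Γ))) := by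
        simpa using tendsto_const_nhds.add (herr δ hδ)
      refine ge_of_tendsto hlim ?_
      filter_upwards [eventually_le_atBot t] with s hs using (main s hs δ hδ Γ hΓ).1
    have step2 : ∀ δ : ℝ, 0 < δ → ρ t Γ ≤ μ t (thickening δ Γ) := by
      intro δ hδ
      have hlim : Tendsto (fun s : ℝ => μ t (thickening δ Γ)
          + ENNReal.ofReal (C * Real.exp (-(p * lam) * (t - s)))
            * (ENNReal.ofReal (δ ^ p))⁻¹ * (1 + m)) atBot (𝓝 (μ t (thickening δ Γ))) := by
        simpa using tendsto_const_nhds.add (herr δ hδ)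
      refine ge_of_tendsto hlim ?_
      filter_upwards [eventually_le_atBot t] with s hs using (main s hs δ hδ Γ hΓ).2
    have l1 : μ t Γ ≤ ρ t Γ := by
      refine ge_of_tendsto
        (tendsto_measure_thickening_of_isClosed ⟨1, one_pos, measure_ne_top _ _⟩ hΓc) ?_
      filter_upwards [self_mem_nhdsWithin] with δ hδ using step1 δ hδ
    have l2 : ρ t Γ ≤ μ t Γ := by
      refine ge_of_tendsto
        (tendsto_measure_thickening_of_isClosed ⟨1, one_pos, measure_ne_top _ _⟩ hΓc) ?_
      filter_upwards [self_mem_nhdsWithin] with δ hδ using step2 δ hδ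
    exact le_antisymm l1 l2
  -- closed sets generate the Borel σ-algebra
  haveI := hμprob t
  haveI := hρprob t
  refine ext_of_generate_finite {S : Set (EuclideanSpace ℝ (Fin d)) | IsClosed S}
    ?_ ?_ (fun S hS => hclosed S hS) ?_
  · exact BorelSpace.measurable_eq.trans borel_eq_generateFrom_isClosed
  · exact fun S hS T hT _ => hS.inter hT
  · simp [measure_univ]
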